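/- Let α ∈ [0,1), W = [[1, α],[0, √(1−α²)]], and for b > 0 set P(b) = W·diag(1/b, b)·W*. Then the condition number κ(P(b)) = λmax(P(b))/λmin(P(b)) attains its unique minimum over b ∈ (0,∞) at b = 1, with minimal value (1+α)/(1−α). -/

import Mathlib

open Matrix Complex Finset
open scoped ComplexOrder

set_option maxHeartbeats 1000000

private theorem eig_det (a c d l : ℝ)
    (h : ∃ v : Fin 2 → ℂ, v ≠ 0 ∧ (!![(a:ℂ), c; c, d]).mulVec v = (l:ℂ) • v) :
    (l-a)*(l-d) = c^2 := by
  obtain ⟨v, hv, hmv⟩ := h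
  have h0 : (!![(a:ℂ), c; c, d] - (l:ℂ) • 1).mulVec v = 0 := by
    rw [Matrix.sub_mulVec, Matrix.smul_mulVec, Matrix.one_mulVec, hmv, sub_self]
  have hdet : (!![(a:ℂ), c; c, d] - (l:ℂ) • 1).det = 0 := by
    rw [← Matrix.exists_mulVec_eq_zero_iff]
    exact ⟨v, hv, h0⟩
  have : ((l-a)*(l-d) - c^2 : ℂ) = 0 := by
    have e : (!![(a:ℂ), c; c, d] - (l:ℂ) • 1) = !![(a:ℂ)-l, c; c, (d:ℂ)-l] := by
      ext i j; fin_cases i <;> fin_cases j <;> simp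
    rw [e, Matrix.det_fin_two_of] at hdet
    rw [← hdet]; ring
  have := sub_eq_zero.mp this
  exact_mod_cast this

private theorem eig_exists (a c d l : ℝ) (h : (l-a)*(l-d) = c^2) :
    ∃ v : Fin 2 → ℂ, v ≠ 0 ∧ (!![(a:ℂ), c; c, d]).mulVec v = (l:ℂ) • v := by
  have hc : ((l:ℂ)-a)*((l:ℂ)-d) = (c:ℂ)^2 := by exact_mod_cast h
  by_cases hld : l = d ∧ c = 0
  · refine ⟨![0, 1], ?_, ?_⟩
    · intro h0; have := congrFun h0 1; simp at this
    · ext i; fin_cases i <;>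
        simp [Matrix.mulVec, dotProduct, hld.1, hld.2]
  · refine ⟨![((l - d : ℝ) : ℂ), ((c : ℝ) : ℂ)], ?_, ?_⟩
    · intro h0
      have h1 := congrFun h0 0; have h2 := congrFun h0 1
      simp [Complex.ofReal_eq_zero, sub_eq_zero] at h1 h2
      exact hld ⟨h1, h2⟩
    · ext i; fin_cases i
      · simp [Matrix.mulVec, dotProduct]
        linear_combination -hc
      · simp [Matrix.mulVec, dotProduct]
        ring

private theorem mat_eq (α b : ℝ) (hb : 0 < b) (hs : Real.sqrt (1 - α ^ 2) ^ 2 = 1 - α ^ 2) :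
    (!![1, (α : ℂ); 0, (Real.sqrt (1 - α ^ 2) : ℂ)] *
        Matrix.diagonal ![(1 / b : ℂ), (b : ℂ)] *
        (!![1, (α : ℂ); 0, (Real.sqrt (1 - α ^ 2) : ℂ)])ᴴ)
      = !![((1/b + α^2*b : ℝ) : ℂ), ((α * b * Real.sqrt (1 - α ^ 2) : ℝ) : ℂ);
           ((α * b * Real.sqrt (1 - α ^ 2) : ℝ) : ℂ), (((1 - α^2) * b : ℝ) : ℂ)] := by
  have hsc : ((Real.sqrt (1 - α ^ 2) : ℂ))^2 = 1 - (α:ℂ)^2 := by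
    exact_mod_cast congrArg (Complex.ofReal) hs
  have hb' : (b:ℂ) ≠ 0 := by exact_mod_cast hb.ne'
  have hdiag : Matrix.diagonal ![(1 / b : ℂ), (b : ℂ)] = !![(1/b:ℂ), 0; 0, (b:ℂ)] := by
    ext i j; fin_cases i <;> fin_cases j <;> simp [Matrix.diagonal]
  have hconj : (!![1, (α : ℂ); 0, (Real.sqrt (1 - α ^ 2) : ℂ)])ᴴ
      = !![1, 0; (α : ℂ), (Real.sqrt (1 - α ^ 2) : ℂ)] := by
    ext i j; fin_cases i <;> fin_cases j <;> simp [Matrix.conjTranspose_apply]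
  rw [hdiag, hconj, Matrix.mul_fin_two, Matrix.mul_fin_two]
  ext i j
  fin_cases i <;> fin_cases j
  · simp; ring
  · simp
  · simp; field_simp
  · simp; field_simp
    linear_combination hsc

theorem stmt4 (α : ℝ) (hα : 0 ≤ α) (hα1 : α < 1) :
    ∀ b : ℝ, 0 < b →
      ∀ lmin lmax : ℝ,
        IsLeast {l : ℝ | ∃ v : Fin 2 → ℂ, v ≠ 0 ∧
            ((!![1, (α : ℂ); 0, (Real.sqrt (1 - α ^ 2) : ℂ)] *
                Matrix.diagonal ![(1 / b : ℂ), (b : ℂ)] *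
                (!![1, (α : ℂ); 0, (Real.sqrt (1 - α ^ 2) : ℂ)])ᴴ).mulVec v = (l : ℂ) • v)} lmin →
        IsGreatest {l : ℝ | ∃ v : Fin 2 → ℂ, v ≠ 0 ∧
            ((!![1, (α : ℂ); 0, (Real.sqrt (1 - α ^ 2) : ℂ)] *
                Matrix.diagonal ![(1 / b : ℂ), (b : ℂ)] *
                (!![1, (α : ℂ); 0, (Real.sqrt (1 - α ^ 2) : ℂ)])ᴴ).mulVec v = (l : ℂ) • v)} lmax →
        (1 + α) / (1 - α) ≤ lmax / lmin ∧ (lmax / lmin = (1 + α) / (1 - α) ↔ b = 1) := by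
  intro b hb lmin lmax hleast hgreat
  have hα2 : 0 < 1 - α ^ 2 := by nlinarith
  have hs : Real.sqrt (1 - α ^ 2) ^ 2 = 1 - α ^ 2 := Real.sq_sqrt hα2.le
  rw [mat_eq α b hb hs] at hleast hgreat
  set s := Real.sqrt (1 - α ^ 2) with hs0
  set a : ℝ := 1/b + α^2*b with ha0
  set c : ℝ := α * b * s with hc0
  set d : ℝ := (1 - α^2) * b with hd0
  set t : ℝ := b + 1/b with ht0
  have htad : a + d = t := by rw [ha0, hd0, ht0]; ring
  have hdet : a * d - c^2 = 1 - α^2 := by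
    rw [ha0, hc0, hd0]
    field_simp
    first
    | linear_combination (-(α^2)*b^2) * hs
    | linear_combination (-(α^2)*b^3) * hs
    | linear_combination (α^2*b^3) * hs
    | linear_combination ((α^2)*b^3*(1-α^2)) * hs
    | nlinarith [hs, sq_nonneg b, hb, sq_nonneg s]
  have ht2 : 2 ≤ t := by
    rw [ht0, ← sub_nonneg]
    have he : b + 1/b - 2 = (b-1)^2 / b := by field_simp; ring
    rw [he]; positivity
  have ht0' : 0 < t := lt_of_lt_of_le (by norm_num) ht2
  have hDnn : 0 ≤ t^2 - 4*(1 - α^2) := by nlinarith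
  set u : ℝ := Real.sqrt (t^2 - 4*(1 - α^2)) with hu0
  have hu2 : u^2 = t^2 - 4*(1 - α^2) := Real.sq_sqrt hDnn
  have hunn : 0 ≤ u := Real.sqrt_nonneg _
  set lam1 : ℝ := (t - u)/2 with hl1
  set lam2 : ℝ := (t + u)/2 with hl2
  have hsum : lam1 + lam2 = t := by rw [hl1, hl2]; ring
  have hprod : lam1 * lam2 = 1 - α^2 := by
    rw [hl1, hl2]; nlinarith [hu2]
  have hlam1pos : 0 < lam1 := by
    rcases lt_or_ge 0 lam1 with h | h
    · exact h
    · exfalso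
      have h2 : 0 < lam2 := by rw [hl2]; positivity
      nlinarith
  have hlam12 : lam1 ≤ lam2 := by rw [hl1, hl2]; linarith
  have hmemiff : ∀ l : ℝ, ((l-a)*(l-d) = c^2) ↔ (l = lam1 ∨ l = lam2) := by
    intro l
    constructor
    · intro h
      have hz : (l - lam1) * (l - lam2) = 0 := by
        linear_combination h - l*hsum + l*htad + hprod - hdet
      rcases mul_eq_zero.mp hz with h' | h'
      · exact Or.inl (by linarith [sub_eq_zero.mp h'])
      · exact Or.inr (by linarith [sub_eq_zero.mp h'])
    · intro h
      rcases h with h | h <;> subst h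
      · linear_combination lam1*hsum - lam1*htad - hprod + hdet
      · linear_combination lam2*hsum - lam2*htad - hprod + hdet
  have hminmem := hleast.1
  have hmaxmem := hgreat.1
  simp only [Set.mem_setOf_eq] at hminmem hmaxmem
  have hminval : lmin = lam1 ∨ lmin = lam2 := (hmemiff lmin).mp (eig_det a c d lmin hminmem)
  have hmaxval : lmax = lam1 ∨ lmax = lam2 := (hmemiff lmax).mp (eig_det a c d lmax hmaxmem)
  have hmin1 : lmin ≤ lam1 := hleast.2 (eig_exists a c d lam1 ((hmemiff lam1).mpr (Or.inl rfl)))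
  have hmax2 : lam2 ≤ lmax := hgreat.2 (eig_exists a c d lam2 ((hmemiff lam2).mpr (Or.inr rfl)))
  have hminl : lmin = lam1 := by
    rcases hminval with h | h
    · exact h
    · subst h; linarith
  have hmaxl : lmax = lam2 := by
    rcases hmaxval with h | h
    · subst h; linarith
    · exact h
  subst hminl; subst hmaxl
  have h1α : 0 < 1 - α := by linarith
  have hut : α * t ≤ u := by
    have htsq : 4 ≤ t^2 := by nlinarith
    have h1 : (α*t)^2 ≤ t^2 - 4*(1 - α^2) := by
      nlinarith [mul_nonneg hα2.le (by linarith : (0:ℝ) ≤ t^2 - 4)]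
    calc α * t = Real.sqrt ((α*t)^2) := (Real.sqrt_sq (mul_nonneg hα ht0'.le)).symm
    _ ≤ u := by rw [hu0]; exact Real.sqrt_le_sqrt h1
  constructor
  · rw [div_le_div_iff₀ h1α hlam1pos]
    rw [hl1, hl2]
    nlinarith [hut]
  · constructor
    · intro heq
      rw [div_eq_div_iff hlam1pos.ne' h1α.ne'] at heq
      have huat : u = α * t := by
        rw [hl1, hl2] at heq
        nlinarith [heq]
      have ht4 : t^2 = 4 := by
        have : α^2 * t^2 = t^2 - 4*(1 - α^2) := by
          rw [← hu2, huat]; ring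
        nlinarith [this, hα2]
      have htt : t = 2 := by nlinarith
      have : (b - 1)^2 = 0 := by
        rw [ht0] at htt
        field_simp at htt
        nlinarith [htt]
      have := pow_eq_zero_iff (n := 2) (by norm_num) |>.mp this
      linarith [sub_eq_zero.mp this]
    · intro hbe
      subst hbe
      have htt : t = 2 := by rw [ht0]; norm_num
      have huu : u = 2 * α := by
        rw [hu0, htt]
        have : (2:ℝ)^2 - 4*(1 - α^2) = (2*α)^2 := by ring
        rw [this, Real.sqrt_sq (by positivity)]
      rw [hl1, hl2, htt, huu]
      have h2α : (2:ℝ) - 2*α ≠ 0 := by intro h0; apply h1α.ne'; linarith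
      field_simp
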